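/- Let δ ∈ (0,1), κ ∈ (0, δ²/2), and let q ≥ 1 be an integer. There exists k′(q) such that for all k ≥ k′(q) and all sufficiently large n the following deterministic statement holds: for every path P in V_N of distance at least N^{1−κ}, there exist a set of vertices Q ⊆ P and boxes B_{j,h} ∈ 𝓑𝓓_{jk}, for 1 ≤ j ≤ j₀ and 1 ≤ h ≤ K₁^{j₀−j}, such that (a) any two distinct points of Q have ℓ∞-distance greater than q; (b) for every 1 ≤ j ≤ j₀ − 1 and all h ≠ h′, d(B*_{j,h}, B*_{j,h′}) > 2^{jk}; (c) |Q| = K₁^{j₀−1} K₂, and for every 1 ≤ j ≤ j₀, Q = ⋃_{h=1}^{K₁^{j₀−j}} (Q ∩ B*_{j,h}) with |Q ∩ B*_{j,h}| = K₁^{j−1} K₂ for every h. -/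

import Mathlib

open MeasureTheory ProbabilityTheory Real Filter
open scoped NNReal ENNReal Classical

noncomputable section

abbrev Vertex : Type := ℤ × ℤ

/-- ℓ∞ distance on ℤ². -/
def dinf (u v : Vertex) : ℤ := max |u.1 - v.1| |u.2 - v.2|

/-- Rectangle of lattice points with lower-left corner `c`, width `w`, height `h`. -/
def rectAt (c : Vertex) (w h : ℕ) : Finset Vertex :=
  Finset.Icc c (c.1 + w - 1, c.2 + h - 1)

/-- Lattice box with lower-left corner `c` and side length `s`. -/
def boxAt (c : Vertex) (s : ℕ) : Finset Vertex := rectAt c s s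

/-- The box `V_N` of side length `N` with lower-left corner at the origin. -/
def vbox (N : ℕ) : Finset Vertex := boxAt (0, 0) N

/-- The concentric box `B*` of side length `3s` around the box with corner `c` and side `s`. -/
def starBox (c : Vertex) (s : ℕ) : Finset Vertex := boxAt (c.1 - s, c.2 - s) (3 * s)

/-- Lower-left corners of the lattice boxes of side length `2^j` containing `z`. -/
def corners (j : ℕ) (z : Vertex) : Finset Vertex :=
  Finset.Icc (z.1 - 2 ^ j + 1, z.2 - 2 ^ j + 1) z

/-- ψ_{j,z} = Σ_{B ∈ 𝓑_{jk}(z)} √k b_{jk,B}. -/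
def psi {Ω : Type} (b : ℕ × Vertex → Ω → ℝ) (k j : ℕ) (z : Vertex) (ω : Ω) : ℝ :=
  ∑ c ∈ corners (j * k) z, Real.sqrt k * b (j * k, c) ω

/-- The K-coarse MBRW φ_{N,z} = Σ_{j=0}^{m-1} ψ_{j,z} with m = ⌊n/k⌋. -/
def phi {Ω : Type} (b : ℕ × Vertex → Ω → ℝ) (n k : ℕ) (z : Vertex) (ω : Ω) : ℝ :=
  ∑ j ∈ Finset.range (n / k), psi b k j z ω

/-- The underlying field `b_{j,B}`: independent centered Gaussians, Var(b_{j,B}) = 2^{-2j},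
indexed by the level `j` and the lower-left corner of the box `B`. -/
def GaussianSetup {Ω : Type} [MeasureSpace Ω] (b : ℕ × Vertex → Ω → ℝ) : Prop :=
  (∀ i, Measurable (b i)) ∧
  iIndepFun b ℙ ∧
  ∀ (j : ℕ) (c : Vertex), Measure.map (b (j, c)) ℙ = gaussianReal 0 (((2 : ℝ≥0) ^ (2 * j))⁻¹)

/-- Nearest neighbors in ℤ². -/
def adj (u v : Vertex) : Prop := |u.1 - v.1| + |u.2 - v.2| = 1

/-- A path in `V_N`: a nonempty list of vertices of `V_N`, consecutive ones nearest neighbors. -/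
def IsPathIn (N : ℕ) (P : List Vertex) : Prop :=
  P ≠ [] ∧ (∀ w ∈ P, w ∈ vbox N) ∧ P.Chain' adj

/-- The path `P` connects `u` to `v`. -/
def Connects (P : List Vertex) (u v : Vertex) : Prop :=
  P.head? = some u ∧ P.getLast? = some v

/-- FPP distance between `u, v ∈ V_N` for the vertex weights `exp (γ f w)`. -/
def fppOf (N : ℕ) (γ : ℝ) (f : Vertex → ℝ) (u v : Vertex) : ℝ :=
  sInf {s : ℝ | ∃ P : List Vertex, IsPathIn N P ∧ Connects P u v ∧
    s = (P.map fun w => Real.exp (γ * f w)).sum}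

/-- The LQG vertex weight e^{γ φ_{N,v}}. -/
def lqgWeight {Ω : Type} (b : ℕ × Vertex → Ω → ℝ) (n k : ℕ) (γ : ℝ) (v : Vertex) (ω : Ω) : ℝ :=
  Real.exp (γ * phi b n k v ω)

/-- μ_γ × μ_γ of the set of pairs satisfying `A`. -/
def muPair {Ω : Type} (b : ℕ × Vertex → Ω → ℝ) (n k : ℕ) (γ : ℝ)
    (A : Vertex × Vertex → Prop) (ω : Ω) : ℝ :=
  (∑ p ∈ vbox (2 ^ n) ×ˢ vbox (2 ^ n),
      Set.indicator {p | A p} (fun p => lqgWeight b n k γ p.1 ω * lqgWeight b n k γ p.2 ω) p) /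
    (∑ w ∈ vbox (2 ^ n), lqgWeight b n k γ w ω) ^ 2

/-- μ_γ of the set of vertices satisfying `A`. -/
def muSet {Ω : Type} (b : ℕ × Vertex → Ω → ℝ) (n k : ℕ) (γ : ℝ)
    (A : Vertex → Prop) (ω : Ω) : ℝ :=
  (∑ v ∈ vbox (2 ^ n), Set.indicator {v | A v} (fun v => lqgWeight b n k γ v ω) v) /
    ∑ w ∈ vbox (2 ^ n), lqgWeight b n k γ w ω

/-- σ_{z,w} = E[φ_{N,z} φ_{N,w}]. -/
def covPhi {Ω : Type} [MeasureSpace Ω] (b : ℕ × Vertex → Ω → ℝ) (n k : ℕ) (z w : Vertex) : ℝ :=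
  ∫ ω, phi b n k z ω * phi b n k w ω ∂ℙ

/-- Maximum of `f` over a finite set of vertices (as an `sSup`). -/
def fmax (B : Finset Vertex) (f : Vertex → ℝ) : ℝ := sSup (f '' ↑B)

def jzero (δ : ℝ) (n k : ℕ) : ℕ := ⌊(1 - δ ^ 2 / 2) * ((n / k : ℕ) : ℝ)⌋₊
def Kone (k : ℕ) : ℕ := 2 ^ (k - 2)
def Ktwo (k q : ℕ) : ℕ := 2 ^ k / (q + 1)
def lzero (δ : ℝ) (n k : ℕ) : ℕ := k * ⌊δ ^ 2 * ((n / k : ℕ) : ℝ)⌋₊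
def lone (δ κ : ℝ) (n k : ℕ) : ℕ :=
  Nat.log 2 (⌈((2 : ℝ) ^ n) ^ ((1 : ℝ) - 2 * κ)⌉₊ + 2 ^ (lzero δ n k + 1)) - 1

/-- A q-dependent {0,1}-valued field on `V_N` with ℙ(ξ_w = 1) ≥ p. -/
def BernoulliField {Ω : Type} [MeasureSpace Ω] (ξ : Vertex → Ω → ℝ) (N q : ℕ) (p : ℝ) : Prop :=
  (∀ w, Measurable (ξ w)) ∧
  (∀ w ω, ξ w ω = 0 ∨ ξ w ω = 1) ∧
  (∀ A B : Set Vertex, (∀ z ∈ A, ∀ w ∈ B, (q : ℤ) < dinf z w) →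
      IndepFun (fun ω (z : A) => ξ z ω) (fun ω (w : B) => ξ w ω) ℙ) ∧
  (∀ w ∈ vbox N, ENNReal.ofReal p ≤ ℙ {ω | ξ w ω = 1})

/-- The Bernoulli field together with its independence from the Gaussian field. -/
def BernoulliSetup {Ω : Type} [MeasureSpace Ω] (b : ℕ × Vertex → Ω → ℝ)
    (ξ : Vertex → Ω → ℝ) (N q : ℕ) (p : ℝ) : Prop :=
  BernoulliField ξ N q p ∧
  IndepFun (fun ω (i : ℕ × Vertex) => b i ω) (fun ω (w : Vertex) => ξ w ω) ℙ

/-- A good path: open, and all Gaussian values at most 7δ log N. -/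
def GoodPath {Ω : Type} (b : ℕ × Vertex → Ω → ℝ) (ξ : Vertex → Ω → ℝ) (n k : ℕ)
    (δ : ℝ) (P : List Vertex) (ω : Ω) : Prop :=
  (∀ w ∈ P, ξ w ω = 1) ∧ ∀ w ∈ P, phi b n k w ω ≤ 7 * δ * Real.log (2 ^ n)

/-- A `B`-crossing for the box with corner `c` and side `L`: a good top-bottom crossing `Q^V`
of `B` with `|Q^V| ≤ 4 L^{1+δ}`, and a good left-right crossing `Q^H` of the 4L × L rectangle
`ÁB` with `|Q^H| ≤ 16 L^{1+δ}`. -/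
def CrossingAt {Ω : Type} (b : ℕ × Vertex → Ω → ℝ) (ξ : Vertex → Ω → ℝ) (n k : ℕ)
    (δ : ℝ) (c : Vertex) (L : ℕ) (ω : Ω) : Prop :=
  (∃ QV : List Vertex, QV ≠ [] ∧ QV.Chain' adj ∧ (∀ w ∈ QV, w ∈ boxAt c L) ∧
      (∃ u, QV.head? = some u ∧ u.2 = c.2 + L - 1) ∧
      (∃ v, QV.getLast? = some v ∧ v.2 = c.2) ∧
      ((QV.length : ℝ) ≤ 4 * (L : ℝ) ^ ((1 : ℝ) + δ)) ∧ GoodPath b ξ n k δ QV ω) ∧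
  (∃ QH : List Vertex, QH ≠ [] ∧ QH.Chain' adj ∧ (∀ w ∈ QH, w ∈ rectAt c (4 * L) L) ∧
      (∃ u, QH.head? = some u ∧ u.1 = c.1) ∧
      (∃ v, QH.getLast? = some v ∧ v.1 = c.1 + 4 * L - 1) ∧
      ((QH.length : ℝ) ≤ 16 * (L : ℝ) ^ ((1 : ℝ) + δ)) ∧ GoodPath b ξ n k δ QH ω)

/-- Regression coefficient a_z (and, with `u`, `v` swapped, b_z). -/
def acoef {Ω : Type} [MeasureSpace Ω] (b : ℕ × Vertex → Ω → ℝ) (n k : ℕ)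
    (u v z : Vertex) : ℝ :=
  (((k * (n / k) : ℕ) : ℝ) * covPhi b n k z u - covPhi b n k z v * covPhi b n k u v) /
    ((((k * (n / k) : ℕ) : ℝ)) ^ 2 - covPhi b n k u v ^ 2)

namespace S9

/-! ### Coordinates and `dinf` basics -/

def co (e : Bool) (v : Vertex) : ℤ := if e then v.1 else v.2

lemma abs_co_le_dinf (e : Bool) (u v : Vertex) : |co e u - co e v| ≤ dinf u v := by
  cases e <;> simp [co, dinf]

lemma dinf_nonneg (u v : Vertex) : 0 ≤ dinf u v :=
  le_trans (abs_nonneg _) (le_max_left _ _)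

lemma dinf_comm (u v : Vertex) : dinf u v = dinf v u := by
  simp [dinf, abs_sub_comm]

lemma dinf_triangle (u v w : Vertex) : dinf u w ≤ dinf u v + dinf v w := by
  refine max_le ?_ ?_
  · exact le_trans (abs_sub_le _ _ _) (add_le_add (le_max_left _ _) (le_max_left _ _))
  · exact le_trans (abs_sub_le _ _ _) (add_le_add (le_max_right _ _) (le_max_right _ _))

lemma dinf_self (u : Vertex) : dinf u u = 0 := by simp [dinf]

lemma adj_dinf_le {u v : Vertex} (h : adj u v) : dinf u v ≤ 1 := by
  unfold adj at h
  have h1 : 0 ≤ |u.1 - v.1| := abs_nonneg _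
  have h2 : 0 ≤ |u.2 - v.2| := abs_nonneg _
  exact max_le (by omega) (by omega)

lemma dinf_step (u v w : Vertex) : |dinf u w - dinf v w| ≤ dinf u v := by
  rw [abs_sub_le_iff]
  constructor
  · have := dinf_triangle u v w; omega
  · have := dinf_triangle v u w; have := dinf_comm u v; omega

lemma dinf_cases {u v : Vertex} {c : ℤ} (h : dinf u v = c) :
    ∃ e : Bool, |co e u - co e v| = c := by
  rcases max_choice |u.1 - v.1| |u.2 - v.2| with h' | h'
  · exact ⟨true, by simpa [co, dinf, h'] using h.symm ▸ (by rw [dinf] at h; omega : |u.1-v.1| = c)⟩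
  · exact ⟨false, by rw [dinf] at h; simpa [co] using by omega⟩

/-! ### Boxes -/

lemma mem_starBox_iff {z c : Vertex} {s : ℕ} :
    z ∈ starBox c s ↔ (c.1 - s ≤ z.1 ∧ z.1 ≤ c.1 + 2*s - 1) ∧
      (c.2 - s ≤ z.2 ∧ z.2 ≤ c.2 + 2*s - 1) := by
  unfold starBox boxAt rectAt
  rw [Finset.mem_Icc, Prod.le_def, Prod.le_def]
  push_cast
  constructor <;> intro h <;> omega

lemma mem_starBox_of_ball {z ζ c : Vertex} {s : ℕ}
    (h1 : c.1 ≤ ζ.1) (h2 : ζ.1 ≤ c.1 + s - 1) (h3 : c.2 ≤ ζ.2) (h4 : ζ.2 ≤ c.2 + s - 1)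
    (hd : dinf z ζ ≤ (s : ℤ)) : z ∈ starBox c s := by
  have e1 : |z.1 - ζ.1| ≤ (s:ℤ) := le_trans (le_max_left _ _) hd
  have e2 : |z.2 - ζ.2| ≤ (s:ℤ) := le_trans (le_max_right _ _) hd
  rw [abs_le] at e1 e2
  rw [mem_starBox_iff]
  omega

lemma corner_lo_mem_starBox {c : Vertex} {s : ℕ} (hs : 0 < s) :
    ((c.1 - s, c.2 - s) : Vertex) ∈ starBox c s := by
  rw [mem_starBox_iff]; constructor <;> constructor <;> simp <;> push_cast <;> omega

lemma corner_hi_mem_starBox {c : Vertex} {s : ℕ} (hs : 0 < s) :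
    ((c.1 + 2*s - 1, c.2 + 2*s - 1) : Vertex) ∈ starBox c s := by
  rw [mem_starBox_iff]; constructor <;> constructor <;> simp <;> push_cast <;> omega

def fcorner (s : ℕ) (v : Vertex) : Vertex := ((s:ℤ) * (v.1 / s), (s:ℤ) * (v.2 / s))

lemma fcorner_le {s : ℕ} (hs : 0 < s) (v : Vertex) :
    (fcorner s v).1 ≤ v.1 ∧ v.1 ≤ (fcorner s v).1 + s - 1 ∧
    (fcorner s v).2 ≤ v.2 ∧ v.2 ≤ (fcorner s v).2 + s - 1 := by
  have hs' : (s:ℤ) ≠ 0 := by exact_mod_cast hs.ne'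
  have hsp : (0:ℤ) < s := by exact_mod_cast hs
  have a1 := Int.mul_ediv_add_emod v.1 (s:ℤ)
  have a2 := Int.emod_nonneg v.1 hs'
  have a3 := Int.emod_lt_of_pos v.1 hsp
  have b1 := Int.mul_ediv_add_emod v.2 (s:ℤ)
  have b2 := Int.emod_nonneg v.2 hs'
  have b3 := Int.emod_lt_of_pos v.2 hsp
  unfold fcorner
  dsimp only
  refine ⟨by linarith, by linarith, by linarith, by linarith⟩

lemma exists_align (s c₀ : ℤ) (hs : 0 < s) : ∃ A : ℤ, s ∣ A ∧ c₀ ≤ A ∧ A ≤ c₀ + s - 1 := by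
  refine ⟨s * ((c₀ + s - 1) / s), Dvd.intro _ rfl, ?_, ?_⟩
  · have h1 := Int.mul_ediv_add_emod (c₀ + s - 1) s
    have h3 := Int.emod_lt_of_pos (c₀ + s - 1) hs
    linarith
  · have h1 := Int.mul_ediv_add_emod (c₀ + s - 1) s
    have h2 := Int.emod_nonneg (c₀ + s - 1) hs.ne'
    linarith

/-! ### Discrete intermediate value lemmas -/

lemma first_ge (g : ℕ → ℤ) (a b : ℕ) (hab : a ≤ b)
    (hstep : ∀ t, a ≤ t → t < b → |g (t+1) - g t| ≤ 1)
    (c : ℤ) (ha : g a ≤ c) (hb : c ≤ g b) :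
    ∃ σ, a ≤ σ ∧ σ ≤ b ∧ g σ = c ∧ ∀ t, a ≤ t → t < σ → g t < c := by
  classical
  have hex : ∃ i, c ≤ g (a + i) := ⟨b - a, by rwa [Nat.add_sub_cancel' hab]⟩
  set i₀ := Nat.find hex with hi₀def
  have hi₀ : c ≤ g (a + i₀) := Nat.find_spec hex
  have hmin : ∀ i, i < i₀ → g (a + i) < c := by
    intro i hi
    have := Nat.find_min hex hi
    omega
  have hle : i₀ ≤ b - a := Nat.find_min' hex (by rwa [Nat.add_sub_cancel' hab])
  refine ⟨a + i₀, Nat.le_add_right _ _, by omega, ?_, ?_⟩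
  · rcases Nat.eq_zero_or_pos i₀ with h0 | h0
    · rw [h0] at hi₀ ⊢; simp at hi₀ ⊢; omega
    · have hlt : g (a + (i₀ - 1)) < c := hmin _ (by omega)
      have hst := hstep (a + (i₀ - 1)) (Nat.le_add_right _ _) (by omega)
      have : a + (i₀ - 1) + 1 = a + i₀ := by omega
      rw [this] at hst
      rw [abs_le] at hst
      omega
  · intro t hat ht
    have : t = a + (t - a) := by omega
    rw [this]
    exact hmin _ (by omega)

lemma exists_crossing (g : ℕ → ℤ) (a b : ℕ) (hab : a ≤ b)
    (hstep : ∀ t, a ≤ t → t < b → |g (t+1) - g t| ≤ 1)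
    (lo hi : ℤ) (hl : g a ≤ lo) (hh : hi ≤ g b) (hlh : lo ≤ hi) :
    ∃ τ σ, a ≤ τ ∧ τ ≤ σ ∧ σ ≤ b ∧ g τ = lo ∧ g σ = hi ∧
      ∀ t, τ ≤ t → t ≤ σ → lo ≤ g t ∧ g t ≤ hi := by
  classical
  obtain ⟨σ, haσ, hσb, hgσ, hσmin⟩ := first_ge g a b hab hstep hi (le_trans hl hlh) hh
  have hex : ∃ i, g (σ - i) ≤ lo := ⟨σ - a, by rwa [Nat.sub_sub_self (by omega)]⟩
  set i₀ := Nat.find hex with hi₀def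
  have hi₀ : g (σ - i₀) ≤ lo := Nat.find_spec hex
  have hmin : ∀ i, i < i₀ → lo < g (σ - i) := by
    intro i hi; have := Nat.find_min hex hi; omega
  have hle : i₀ ≤ σ - a := Nat.find_min' hex (by rwa [Nat.sub_sub_self (by omega)])
  have hgτ : g (σ - i₀) = lo := by
    rcases Nat.eq_zero_or_pos i₀ with h0 | h0
    · rw [h0] at hi₀ ⊢; simp only [Nat.sub_zero] at hi₀ ⊢; omega
    · have hlt : lo < g (σ - (i₀ - 1)) := hmin _ (by omega)
      have heq : σ - (i₀ - 1) = (σ - i₀) + 1 := by omega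
      rw [heq] at hlt
      have hst := hstep (σ - i₀) (by omega) (by omega)
      rw [abs_le] at hst
      omega
  refine ⟨σ - i₀, σ, by omega, by omega, hσb, hgτ, hgσ, ?_⟩
  intro t hτt htσ
  have hts : σ - (σ - t) = t := by omega
  constructor
  · rcases Nat.lt_or_ge (σ - t) i₀ with h | h
    · have := hmin _ h; rw [hts] at this; omega
    · have ht₀ : t = σ - i₀ := by omega
      rw [ht₀, hgτ]
  · rcases eq_or_lt_of_le htσ with heq | hlt'
    · rw [heq]; omega
    · exact le_of_lt (hσmin t (by omega) hlt')


/-! ### Scales -/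

def sc (k j : ℕ) : ℕ := 2 ^ (j * k)

def rr (k j : ℕ) : ℤ := (sc k j : ℤ) - (sc k (j-1) : ℤ)

lemma sc_pos (k j : ℕ) : 0 < sc k j := pow_pos (by norm_num) _

lemma sc_zero (k : ℕ) : sc k 0 = 1 := by simp [sc]

lemma sc_one (k : ℕ) : sc k 1 = 2 ^ k := by simp [sc]

lemma sc_succ (k j : ℕ) : sc k (j+1) = sc k j * 2 ^ k := by
  unfold sc; rw [Nat.succ_mul, pow_add]

lemma sc_mono {k j j' : ℕ} (h : j' ≤ j) : sc k j' ≤ sc k j :=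
  Nat.pow_le_pow_right (by norm_num) (Nat.mul_le_mul_right _ h)

lemma sc_big {k j j' : ℕ} (hk : 5 ≤ k) (h : j' < j) : 4 * sc k j' ≤ sc k j := by
  have : sc k (j'+1) ≤ sc k j := sc_mono h
  rw [sc_succ] at this
  have h4 : 4 ≤ 2 ^ k := by
    calc (4:ℕ) = 2^2 := by norm_num
    _ ≤ 2^k := Nat.pow_le_pow_right (by norm_num) (by omega)
  nlinarith [sc_pos k j']

lemma rr_nonneg (k j : ℕ) : 0 ≤ rr k j := by
  unfold rr
  have h := sc_mono (k := k) (Nat.sub_le j 1)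
  have : (sc k (j-1) : ℤ) ≤ (sc k j : ℤ) := by exact_mod_cast h
  omega

lemma rr_le_sc (k j : ℕ) : rr k j ≤ (sc k j : ℤ) := by
  unfold rr
  have := sc_pos k (j-1)
  omega

lemma rr_one (k : ℕ) : rr k 1 = (2:ℤ)^k - 1 := by
  unfold rr
  rw [sc_one, sc_zero]
  push_cast
  ring

lemma rr_eq (k j : ℕ) (hj : 1 ≤ j) : rr k j = (sc k j : ℤ) - (sc k (j-1) : ℤ) := rfl

lemma hK14 {k : ℕ} (hk : 5 ≤ k) : 4 * Kone k = 2 ^ k := by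
  unfold Kone
  have : k - 2 + 2 = k := by omega
  calc 4 * 2 ^ (k-2) = 2 ^ (k-2) * 2^2 := by ring
  _ = 2 ^ (k-2+2) := by rw [pow_add]
  _ = 2 ^ k := by rw [this]

lemma Kone_pos (k : ℕ) : 0 < Kone k := pow_pos (by norm_num) _

lemma eq_of_dvd_window {s x y : ℤ} (hs : 0 < s) (hx : s ∣ x) (hy : s ∣ y)
    (h1 : x - s < y) (h2 : y ≤ x) : y = x := by
  obtain ⟨d, hd⟩ := dvd_sub hx hy
  have hd0 : d = 0 := by
    by_contra h
    rcases lt_or_gt_of_ne h with hneg | hpos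
    · have : s * d ≤ s * (-1) := mul_le_mul_of_nonneg_left (by omega) hs.le
      linarith
    · have : s * 1 ≤ s * d := mul_le_mul_of_nonneg_left (by omega) hs.le
      linarith
  rw [hd0, mul_zero] at hd
  linarith

lemma star_co_bound {z cnr : Vertex} {s : ℕ} (h : z ∈ starBox cnr s) (e : Bool) :
    co e cnr - s ≤ co e z ∧ co e z ≤ co e cnr + 2*s - 1 := by
  rw [mem_starBox_iff] at h
  cases e <;> simp only [co, if_true, if_false] <;> tauto

lemma dinf_lower (x y u v : Vertex) : dinf u v - dinf x u - dinf y v ≤ dinf x y := by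
  have t1 := dinf_triangle u x v
  have t2 := dinf_triangle x y v
  have c1 := dinf_comm u x
  have c2 := dinf_comm y v
  omega

lemma abs_pm {ε : ℤ} (hε : ε = 1 ∨ ε = -1) (x y : ℤ) : |ε * x - ε * y| = |x - y| := by
  rw [← mul_sub, abs_mul]
  rcases hε with h | h <;> rw [h] <;> simp

/-! ### The recursive construction -/

set_option maxHeartbeats 2000000 in
lemma build (k q : ℕ) (hq : 1 ≤ q) (hk : 5 ≤ k) (hqk : q + 1 ≤ 2^k) (f : ℕ → Vertex) :
    ∀ j, 1 ≤ j → ∀ a b : ℕ, a ≤ b →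
    (∀ t, a ≤ t → t < b → adj (f t) (f (t+1))) →
    (∀ t, a ≤ t → t ≤ b → dinf (f t) (f a) ≤ rr k j) →
    (∃ e : Bool, |co e (f b) - co e (f a)| = rr k j) →
    ∃ (T : ℕ → ℕ → Vertex) (Q : Finset Vertex),
      (∀ j' h, 1 ≤ j' → j' ≤ j → 1 ≤ h → h ≤ Kone k ^ (j - j') →
        ∃ c : ℤ × ℤ, T j' h = ((sc k j' : ℤ) * c.1, (sc k j' : ℤ) * c.2)) ∧
      (Q ⊆ (Finset.Icc a b).image f) ∧
      Q.card = Kone k ^ (j-1) * Ktwo k q ∧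
      (∀ x ∈ Q, ∀ y ∈ Q, x ≠ y → (q:ℤ) < dinf x y) ∧
      (∀ j' h h', 1 ≤ j' → j' ≤ j → 1 ≤ h → h ≤ Kone k ^ (j - j') → 1 ≤ h' →
        h' ≤ Kone k ^ (j-j') → h ≠ h' →
        ∀ z ∈ starBox (T j' h) (sc k j'), ∀ w ∈ starBox (T j' h') (sc k j'),
          (sc k j' : ℤ) < dinf z w) ∧
      (∀ j', 1 ≤ j' → j' ≤ j →
        (∀ x ∈ Q, ∃ h, 1 ≤ h ∧ h ≤ Kone k ^ (j-j') ∧ x ∈ starBox (T j' h) (sc k j')) ∧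
        (∀ h, 1 ≤ h → h ≤ Kone k ^ (j-j') →
          (Q ∩ starBox (T j' h) (sc k j')).card = Kone k ^ (j'-1) * Ktwo k q)) ∧
      (∀ x ∈ Q, dinf x (f a) ≤ (sc k j : ℤ)) ∧
      (∀ j' h, 1 ≤ j' → j' ≤ j → 1 ≤ h → h ≤ Kone k ^ (j-j') →
        ∀ z ∈ starBox (T j' h) (sc k j'), dinf z (f a) ≤ (sc k j : ℤ) + (sc k j' : ℤ) - 1) := by
  intro j hj
  induction j, hj using Nat.le_induction with
  | base =>
    intro a b hab hadj hball hcoord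
    obtain ⟨e, he⟩ := hcoord
    have hεex : ∃ ε : ℤ, (ε = 1 ∨ ε = -1) ∧ ε * co e (f b) = ε * co e (f a) + rr k 1 := by
      rcases le_or_gt 0 (co e (f b) - co e (f a)) with h | h
      · exact ⟨1, Or.inl rfl, by rw [abs_of_nonneg h] at he; linarith⟩
      · exact ⟨-1, Or.inr rfl, by rw [abs_of_neg h] at he; linarith⟩
    obtain ⟨ε, hεpm, hgb⟩ := hεex
    set g : ℕ → ℤ := fun t => ε * co e (f t) with hgdef
    have hgb' : g b = g a + rr k 1 := hgb
    have hstepg : ∀ t, a ≤ t → t < b → |g (t+1) - g t| ≤ 1 := by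
      intro t h1 h2
      show |ε * co e (f (t+1)) - ε * co e (f t)| ≤ 1
      rw [abs_pm hεpm]
      calc |co e (f (t+1)) - co e (f t)| ≤ dinf (f (t+1)) (f t) := abs_co_le_dinf _ _ _
        _ ≤ 1 := by rw [dinf_comm]; exact adj_dinf_le (hadj t h1 h2)
    have hK2 : 1 ≤ Ktwo k q := (Nat.one_le_div_iff (by omega)).mpr hqk
    have hK2' : Ktwo k q * (q+1) ≤ 2^k := Nat.div_mul_le_self _ _
    have h2k : 4 ≤ 2^k := by
      calc (4:ℕ) = 2^2 := by norm_num
      _ ≤ 2^k := Nat.pow_le_pow_right (by norm_num) (by omega)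
    have hsel : ∀ i : ℕ, ∃ t, a ≤ t ∧ t ≤ b ∧
        g t = g a + ((q+1) * min i (Ktwo k q - 1) : ℕ) := by
      intro i
      have hle : ((q+1) * min i (Ktwo k q - 1) : ℕ) + 2 ≤ 2^k := by
        have h1 : (q+1) * min i (Ktwo k q - 1) ≤ (q+1) * (Ktwo k q - 1) :=
          Nat.mul_le_mul_left _ (min_le_right _ _)
        have key : (q+1) * (Ktwo k q - 1) + (q+1) = Ktwo k q * (q+1) := by
          calc (q+1) * (Ktwo k q - 1) + (q+1) = (q+1) * ((Ktwo k q - 1) + 1) := by ring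
          _ = Ktwo k q * (q+1) := by rw [Nat.sub_add_cancel hK2, Nat.mul_comm]
        omega
      have hle' : (((q+1) * min i (Ktwo k q - 1) : ℕ) : ℤ) + 2 ≤ (2:ℤ)^k := by
        exact_mod_cast (Nat.cast_le (α := ℤ)).mpr hle
      obtain ⟨σ, h1, h2, h3, _⟩ := first_ge g a b hab hstepg
        (g a + ((q+1) * min i (Ktwo k q - 1) : ℕ))
        (le_add_of_nonneg_right (by positivity))
        (by rw [hgb', rr_one]; linarith)
      exact ⟨σ, h1, h2, h3⟩
    choose t ht1 ht2 ht3 using hsel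
    have htv : ∀ i, i < Ktwo k q → g (t i) = g a + ((q+1) * i : ℕ) := by
      intro i hi
      have := ht3 i
      rwa [min_eq_left (by omega)] at this
    set Q : Finset Vertex := (Finset.range (Ktwo k q)).image (fun i => f (t i)) with hQdef
    have hinj : Set.InjOn (fun i => f (t i)) ↑(Finset.range (Ktwo k q)) := by
      intro i hi i' hi' hfe
      simp only [Finset.coe_range, Set.mem_Iio] at hi hi'
      have e1 := htv i hi
      have e2 := htv i' hi'
      have hfe' : f (t i) = f (t i') := hfe
      have : g (t i) = g (t i') := by show ε * co e (f (t i)) = _; rw [hfe']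
      rw [e1, e2] at this
      have hx : (((q+1) * i : ℕ) : ℤ) = (((q+1) * i' : ℕ) : ℤ) := by linarith
      have hx' : ((q+1) * i : ℕ) = ((q+1) * i' : ℕ) := by exact_mod_cast hx
      exact Nat.eq_of_mul_eq_mul_left (by omega) hx'
    have hQcard : Q.card = Ktwo k q := by
      rw [hQdef, Finset.card_image_of_injOn hinj, Finset.card_range]
    have hQmem : ∀ x ∈ Q, ∃ i, i < Ktwo k q ∧ x = f (t i) := by
      intro x hx
      rw [hQdef, Finset.mem_image] at hx
      obtain ⟨i, hi, hxe⟩ := hx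
      exact ⟨i, Finset.mem_range.mp hi, hxe.symm⟩
    have hQball : ∀ x ∈ Q, dinf x (f a) ≤ (sc k 1 : ℤ) := by
      intro x hx
      obtain ⟨i, hi, rfl⟩ := hQmem x hx
      exact le_trans (hball (t i) (ht1 i) (ht2 i)) (rr_le_sc k 1)
    have hfc := fcorner_le (sc_pos k 1) (f a)
    have hQstar : ∀ x ∈ Q, x ∈ starBox (fcorner (sc k 1) (f a)) (sc k 1) := by
      intro x hx
      exact mem_starBox_of_ball hfc.1 hfc.2.1 hfc.2.2.1 hfc.2.2.2 (hQball x hx)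
    refine ⟨fun _ _ => fcorner (sc k 1) (f a), Q, ?_, ?_, ?_, ?_, ?_, ?_, hQball, ?_⟩
    · intro j' h h1 h2 h3 h4
      have : j' = 1 := by omega
      subst this
      exact ⟨((f a).1 / (sc k 1 : ℤ), (f a).2 / (sc k 1 : ℤ)), rfl⟩
    · intro x hx
      obtain ⟨i, hi, rfl⟩ := hQmem x hx
      exact Finset.mem_image.mpr ⟨t i, Finset.mem_Icc.mpr ⟨ht1 i, ht2 i⟩, rfl⟩
    · simpa using hQcard
    · intro x hx y hy hxy
      obtain ⟨i, hi, rfl⟩ := hQmem x hx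
      obtain ⟨i', hi', rfl⟩ := hQmem y hy
      have hne : i ≠ i' := fun hii => hxy (by rw [hii])
      have hgd : g (t i) - g (t i') = ((q:ℤ)+1) * ((i:ℤ) - i') := by
        rw [htv i hi, htv i' hi']; push_cast; ring
      have habs : |g (t i) - g (t i')| = ((q:ℤ)+1) * |(i:ℤ) - i'| := by
        rw [hgd, abs_mul, abs_of_nonneg (by positivity)]
      have hone : 1 ≤ |(i:ℤ) - i'| :=
        Int.one_le_abs (sub_ne_zero.mpr (fun hc => hne (by exact_mod_cast hc)))
      have hlow : (q:ℤ) + 1 ≤ |g (t i) - g (t i')| := by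
        rw [habs]; nlinarith
      have : |g (t i) - g (t i')| = |co e (f (t i)) - co e (f (t i'))| := abs_pm hεpm _ _
      have hd := abs_co_le_dinf e (f (t i)) (f (t i'))
      omega
    · intro j' h h' h1 h2 h3 h4 h5 h6 h7
      have hj' : j' = 1 := by omega
      subst hj'
      simp only [Nat.sub_self, pow_zero] at h4 h6
      omega
    · intro j' h1 h2
      have : j' = 1 := by omega
      subst this
      constructor
      · intro x hx
        exact ⟨1, le_rfl, by simp, hQstar x hx⟩
      · intro h hh1 hh2
        have : Q ∩ starBox (fcorner (sc k 1) (f a)) (sc k 1) = Q :=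
          Finset.inter_eq_left.mpr (fun x hx => hQstar x hx)
        rw [this]
        simpa using hQcard
    · intro j' h h1 h2 h3 h4 z hz
      have : j' = 1 := by omega
      subst this
      have hbt := star_co_bound hz true
      have hbf := star_co_bound hz false
      norm_num [co] at hbt hbf
      refine max_le (abs_le.mpr ⟨?_, ?_⟩) (abs_le.mpr ⟨?_, ?_⟩) <;> omega
  | succ j hj IH =>
    intro a b hab hadj hball hcoord
    obtain ⟨e, he⟩ := hcoord
    set s : ℕ := sc k j with hsdef
    have hspos : 0 < s := sc_pos k j
    have hspos' : (0:ℤ) < (s:ℤ) := by exact_mod_cast hspos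
    have hK1pos : 0 < Kone k := Kone_pos k
    have h2k4 : (4:ℕ) ≤ 2^k := by
      calc (4:ℕ) = 2^2 := by norm_num
      _ ≤ 2^k := Nat.pow_le_pow_right (by norm_num) (by omega)
    have hscsucc : (sc k (j+1) : ℤ) = 2^k * (s:ℤ) := by
      rw [sc_succ]; push_cast; ring
    have hrr : rr k (j+1) = (sc k (j+1) : ℤ) - (s:ℤ) := by
      unfold rr; simp; exact hsdef.symm
    have hrrj : rr k j ≤ (s:ℤ) := rr_le_sc k j
    have hrrj0 : 0 ≤ rr k j := rr_nonneg k j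
    have hεex : ∃ ε : ℤ, (ε = 1 ∨ ε = -1) ∧ ε * co e (f b) = ε * co e (f a) + rr k (j+1) := by
      rcases le_or_gt 0 (co e (f b) - co e (f a)) with h | h
      · exact ⟨1, Or.inl rfl, by rw [abs_of_nonneg h] at he; linarith⟩
      · exact ⟨-1, Or.inr rfl, by rw [abs_of_neg h] at he; linarith⟩
    obtain ⟨ε, hεpm, hgb⟩ := hεex
    have hε2 : ε * ε = 1 := by rcases hεpm with rfl | rfl <;> norm_num
    set g : ℕ → ℤ := fun t => ε * co e (f t) with hgdef
    have hgb' : g b = g a + rr k (j+1) := hgb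
    have hstepg : ∀ t, a ≤ t → t < b → |g (t+1) - g t| ≤ 1 := by
      intro t h1 h2
      show |ε * co e (f (t+1)) - ε * co e (f t)| ≤ 1
      rw [abs_pm hεpm]
      calc |co e (f (t+1)) - co e (f t)| ≤ dinf (f (t+1)) (f t) := abs_co_le_dinf _ _ _
        _ ≤ 1 := by rw [dinf_comm]; exact adj_dinf_le (hadj t h1 h2)
    obtain ⟨A, hAdvd, hA1, hA2⟩ := exists_align (s:ℤ) (g a) hspos'
    have h4K : (4:ℤ) * (Kone k:ℤ) = 2^k := by exact_mod_cast hK14 hk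
    have H : ∀ c : ℕ, ∃ τ β : ℕ, ∃ Tc : ℕ → ℕ → Vertex, ∃ Qc : Finset Vertex,
        a ≤ τ ∧ τ ≤ β ∧ β ≤ b ∧
        g τ = A + 4 * (s:ℤ) * ((min c (Kone k - 1) : ℕ) : ℤ) ∧
        ((∀ j' h, 1 ≤ j' → j' ≤ j → 1 ≤ h → h ≤ Kone k ^ (j - j') →
          ∃ cc : ℤ × ℤ, Tc j' h = ((sc k j' : ℤ) * cc.1, (sc k j' : ℤ) * cc.2)) ∧
        (Qc ⊆ (Finset.Icc τ β).image f) ∧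
        Qc.card = Kone k ^ (j-1) * Ktwo k q ∧
        (∀ x ∈ Qc, ∀ y ∈ Qc, x ≠ y → (q:ℤ) < dinf x y) ∧
        (∀ j' h h', 1 ≤ j' → j' ≤ j → 1 ≤ h → h ≤ Kone k ^ (j - j') → 1 ≤ h' →
          h' ≤ Kone k ^ (j-j') → h ≠ h' →
          ∀ z ∈ starBox (Tc j' h) (sc k j'), ∀ w ∈ starBox (Tc j' h') (sc k j'),
            (sc k j' : ℤ) < dinf z w) ∧
        (∀ j', 1 ≤ j' → j' ≤ j →
          (∀ x ∈ Qc, ∃ h, 1 ≤ h ∧ h ≤ Kone k ^ (j-j') ∧ x ∈ starBox (Tc j' h) (sc k j')) ∧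
          (∀ h, 1 ≤ h → h ≤ Kone k ^ (j-j') →
            (Qc ∩ starBox (Tc j' h) (sc k j')).card = Kone k ^ (j'-1) * Ktwo k q)) ∧
        (∀ x ∈ Qc, dinf x (f τ) ≤ ((s:ℕ) : ℤ)) ∧
        (∀ j' h, 1 ≤ j' → j' ≤ j → 1 ≤ h → h ≤ Kone k ^ (j-j') →
          ∀ z ∈ starBox (Tc j' h) (sc k j'), dinf z (f τ) ≤ ((s:ℕ) : ℤ) + (sc k j' : ℤ) - 1)) := by
      intro c
      set mc : ℕ := min c (Kone k - 1) with hmcd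
      have hmcK : mc ≤ Kone k - 1 := min_le_right _ _
      have hmcZ : (mc:ℤ) ≤ (Kone k : ℤ) - 1 := by
        have h2 : ((Kone k - 1 : ℕ):ℤ) = (Kone k:ℤ) - 1 := by
          rw [Nat.cast_sub hK1pos]; simp
        have : (mc:ℤ) ≤ ((Kone k - 1 : ℕ):ℤ) := by exact_mod_cast hmcK
        omega
      have hfit : A + 4*(s:ℤ)*(mc:ℤ) + s ≤ g b := by
        rw [hgb', hrr, hscsucc]
        have h3 : 4*(s:ℤ)*(mc:ℤ) ≤ 4*(s:ℤ)*((Kone k:ℤ) - 1) :=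
          mul_le_mul_of_nonneg_left hmcZ (by positivity)
        have h5 : (4:ℤ)*(s:ℤ)*((Kone k:ℤ)-1) = 2^k*(s:ℤ) - 4*(s:ℤ) := by
          rw [mul_sub, show (4:ℤ)*(s:ℤ)*(Kone k:ℤ) = ((4:ℤ)*(Kone k:ℤ))*(s:ℤ) by ring, h4K]
          ring
        linarith
      obtain ⟨τ, σ, haτ, hτσ, hσb, hgτ, hgσ, hwin⟩ := exists_crossing g a b hab hstepg
        (A + 4*(s:ℤ)*(mc:ℤ)) (A + 4*(s:ℤ)*(mc:ℤ) + s)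
        (by have h0 : (0:ℤ) ≤ 4*(s:ℤ)*(mc:ℤ) := by positivity
            linarith)
        hfit (by linarith)
      set d : ℕ → ℤ := fun t => dinf (f t) (f τ) with hddef
      have hdstep : ∀ t, τ ≤ t → t < σ → |d (t+1) - d t| ≤ 1 := by
        intro t h1 h2
        have hadj' : adj (f t) (f (t+1)) := hadj t (le_trans haτ h1) (by omega)
        calc |d (t+1) - d t| ≤ dinf (f (t+1)) (f t) := dinf_step _ _ _
          _ ≤ 1 := by rw [dinf_comm]; exact adj_dinf_le hadj'
      have hdσ : rr k j ≤ d σ := by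
        have h1 : |co e (f σ) - co e (f τ)| = |g σ - g τ| := (abs_pm hεpm _ _).symm
        have h2 : |g σ - g τ| = (s:ℤ) := by
          rw [hgσ, hgτ]
          rw [show A + 4*(s:ℤ)*(mc:ℤ) + (s:ℤ) - (A + 4*(s:ℤ)*(mc:ℤ)) = (s:ℤ) by ring]
          exact abs_of_nonneg hspos'.le
        calc rr k j ≤ (s:ℤ) := hrrj
        _ = |g σ - g τ| := h2.symm
        _ = |co e (f σ) - co e (f τ)| := h1.symm
        _ ≤ dinf (f σ) (f τ) := abs_co_le_dinf _ _ _
      obtain ⟨β, hτβ, hβσ, hdβ, hdmin⟩ := first_ge d τ σ hτσ hdstep (rr k j)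
        (by show dinf (f τ) (f τ) ≤ _; rw [dinf_self]; exact hrrj0) hdσ
      have hballc : ∀ t, τ ≤ t → t ≤ β → dinf (f t) (f τ) ≤ rr k j := by
        intro t h1 h2
        rcases eq_or_lt_of_le h2 with rfl | hlt
        · exact le_of_eq hdβ
        · exact le_of_lt (hdmin t h1 hlt)
      have hcoordc : ∃ e' : Bool, |co e' (f β) - co e' (f τ)| = rr k j := dinf_cases hdβ
      obtain ⟨Tc, Qc, p1, p2, p3, p4, p5, p6, p7, p8⟩ := IH τ β hτβ
        (fun t h1 h2 => hadj t (le_trans haτ h1) (by omega)) hballc hcoordc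
      exact ⟨τ, β, Tc, Qc, haτ, hτβ, le_trans hβσ hσb, hgτ,
        p1, p2, p3, p4, p5, p6, p7, p8⟩
    choose τ β Tc Qc hτa hτβ hβb hgτ hP using H
    have hdy := fun c => (hP c).1
    have hsub := fun c => (hP c).2.1
    have hcard := fun c => (hP c).2.2.1
    have hqsep := fun c => (hP c).2.2.2.1
    have hsep := fun c => (hP c).2.2.2.2.1
    have hpart := fun c => (hP c).2.2.2.2.2.1
    have hb7 := fun c => (hP c).2.2.2.2.2.2.1
    have hb8 := fun c => (hP c).2.2.2.2.2.2.2
    clear hP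
    have hτball : ∀ c, dinf (f (τ c)) (f a) ≤ rr k (j+1) :=
      fun c => hball (τ c) (hτa c) (le_trans (hτβ c) (hβb c))
    have hgτv : ∀ c, c < Kone k → g (τ c) = A + 4*(s:ℤ)*(c:ℤ) := by
      intro c hc
      have h := hgτ c
      rwa [min_eq_left (by omega)] at h
    have hζsep : ∀ c c', c < Kone k → c' < Kone k → c ≠ c' →
        4*(s:ℤ) ≤ dinf (f (τ c)) (f (τ c')) := by
      intro c c' hc hc' hne
      have h1 : g (τ c) - g (τ c') = 4*(s:ℤ)*((c:ℤ) - (c':ℤ)) := by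
        rw [hgτv c hc, hgτv c' hc']; ring
      have h3 : 1 ≤ |(c:ℤ)-(c':ℤ)| :=
        Int.one_le_abs (sub_ne_zero.mpr (fun hcc => hne (by exact_mod_cast hcc)))
      have h2 : |g (τ c) - g (τ c')| = 4*(s:ℤ)*|(c:ℤ)-(c':ℤ)| := by
        rw [h1, abs_mul, abs_of_nonneg (by positivity : (0:ℤ) ≤ 4*(s:ℤ))]
      have h4 : 4*(s:ℤ) ≤ |g (τ c) - g (τ c')| := by
        rw [h2]; nlinarith
      have h5 : |g (τ c) - g (τ c')| = |co e (f (τ c)) - co e (f (τ c'))| :=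
        abs_pm hεpm _ _
      calc 4*(s:ℤ) ≤ |g (τ c) - g (τ c')| := h4
      _ = |co e (f (τ c)) - co e (f (τ c'))| := h5
      _ ≤ dinf (f (τ c)) (f (τ c')) := abs_co_le_dinf _ _ _
    have hQfar : ∀ c c', c < Kone k → c' < Kone k → c ≠ c' →
        ∀ x ∈ Qc c, ∀ y ∈ Qc c', 2*(s:ℤ) ≤ dinf x y := by
      intro c c' hc hc' hne x hx y hy
      have h1 := hb7 c x hx
      have h2 := hb7 c' y hy
      have h3 := hζsep c c' hc hc' hne
      have h4 := dinf_lower x y (f (τ c)) (f (τ c'))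
      omega
    have hcoζ : ∀ c, c < Kone k → co e (f (τ c)) = ε * (A + 4*(s:ℤ)*(c:ℤ)) := by
      intro c hc
      have h1 : co e (f (τ c)) = ε * g (τ c) := by
        show co e (f (τ c)) = ε * (ε * co e (f (τ c)))
        rw [← mul_assoc, hε2, one_mul]
      rw [h1, hgτv c hc]
    have hresolve : ∀ c, c < Kone k → co e (Tc c j 1) = co e (f (τ c)) := by
      intro c hc
      obtain ⟨cc, hcc⟩ := hdy c j 1 hj le_rfl le_rfl (by simp)
      have hb8c := hb8 c j 1 hj le_rfl le_rfl (by simp)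
      have d1 := hb8c _ (corner_lo_mem_starBox (c := Tc c j 1) (s := s) hspos)
      have d2 := hb8c _ (corner_hi_mem_starBox (c := Tc c j 1) (s := s) hspos)
      have e1 : |co e (((Tc c j 1).1 - (s:ℤ), (Tc c j 1).2 - (s:ℤ)) : Vertex) - co e (f (τ c))| ≤ (s:ℤ) + (s:ℤ) - 1 :=
        le_trans (abs_co_le_dinf _ _ _) d1
      have e2 : |co e (((Tc c j 1).1 + 2*(s:ℤ) - 1, (Tc c j 1).2 + 2*(s:ℤ) - 1) : Vertex) - co e (f (τ c))| ≤ (s:ℤ) + (s:ℤ) - 1 :=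
        le_trans (abs_co_le_dinf _ _ _) d2
      have elo : co e (((Tc c j 1).1 - (s:ℤ), (Tc c j 1).2 - (s:ℤ)) : Vertex) = co e (Tc c j 1) - (s:ℤ) := by
        cases e <;> simp [co]
      have ehi : co e (((Tc c j 1).1 + 2*(s:ℤ) - 1, (Tc c j 1).2 + 2*(s:ℤ) - 1) : Vertex) = co e (Tc c j 1) + 2*(s:ℤ) - 1 := by
        cases e <;> simp [co]
      rw [elo, abs_le] at e1
      rw [ehi, abs_le] at e2
      have hdvdR : (s:ℤ) ∣ co e (Tc c j 1) := by
        rw [hcc]; cases e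
        · exact ⟨cc.2, rfl⟩
        · exact ⟨cc.1, rfl⟩
      have hdvdx : (s:ℤ) ∣ co e (f (τ c)) := by
        rw [hcoζ c hc]
        obtain ⟨dA, hdA⟩ := hAdvd
        exact ⟨ε * (dA + 4*(c:ℤ)), by rw [hdA]; ring⟩
      exact eq_of_dvd_window hspos' hdvdx hdvdR (by omega) (by omega)
    have hcross : ∀ c c', c < Kone k → c' < Kone k → c ≠ c' → ∀ j' h₁ h₂, 1 ≤ j' → j' ≤ j →
        1 ≤ h₁ → h₁ ≤ Kone k ^ (j-j') → 1 ≤ h₂ → h₂ ≤ Kone k ^ (j-j') →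
        ∀ z ∈ starBox (Tc c j' h₁) (sc k j'), ∀ w ∈ starBox (Tc c' j' h₂) (sc k j'),
          (sc k j' : ℤ) < dinf z w := by
      intro c c' hc hc' hne j' h₁ h₂ hj'1 hj'j hh₁1 hh₁2 hh₂1 hh₂2 z hz w hw
      rcases eq_or_lt_of_le hj'j with rfl | hlt
      · have hh₁ : h₁ = 1 := by simp only [Nat.sub_self, pow_zero] at hh₁2; omega
        have hh₂ : h₂ = 1 := by simp only [Nat.sub_self, pow_zero] at hh₂2; omega
        subst hh₁; subst hh₂
        have hzb := star_co_bound hz e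
        have hwb := star_co_bound hw e
        have hcd : co e (Tc c j' 1) - co e (Tc c' j' 1) = ε*(4*(s:ℤ)*((c:ℤ)-(c':ℤ))) := by
          rw [hresolve c hc, hresolve c' hc', hcoζ c hc, hcoζ c' hc']; ring
        have h3 : 1 ≤ |(c:ℤ)-(c':ℤ)| :=
          Int.one_le_abs (sub_ne_zero.mpr (fun hcc => hne (by exact_mod_cast hcc)))
        have habs : 4*(s:ℤ) ≤ |co e (Tc c j' 1) - co e (Tc c' j' 1)| := by
          rw [hcd, abs_mul]
          have hae : |ε| = 1 := by rcases hεpm with rfl | rfl <;> norm_num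
          rw [hae, one_mul, abs_mul, abs_of_nonneg (by positivity : (0:ℤ) ≤ 4*(s:ℤ))]
          nlinarith
        have hfin : (s:ℤ) + 1 ≤ |co e z - co e w| := by
          rcases abs_cases (co e (Tc c j' 1) - co e (Tc c' j' 1)) with ⟨heq, hsgn⟩ | ⟨heq, hsgn⟩
          · rw [heq] at habs
            refine le_abs.mpr (Or.inl ?_)
            omega
          · rw [heq] at habs
            refine le_abs.mpr (Or.inr ?_)
            omega
        have hzw := abs_co_le_dinf e z w
        omega
      · have hz8 := hb8 c j' h₁ hj'1 hj'j hh₁1 hh₁2 z hz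
        have hw8 := hb8 c' j' h₂ hj'1 hj'j hh₂1 hh₂2 w hw
        have hsep4 := hζsep c c' hc hc' hne
        have hlow := dinf_lower z w (f (τ c)) (f (τ c'))
        have hbig : 4 * sc k j' ≤ s := sc_big hk hlt
        have hbig' : 4 * (sc k j' : ℤ) ≤ (s:ℤ) := by exact_mod_cast hbig
        have hsp : (0:ℤ) < (sc k j' : ℤ) := by exact_mod_cast sc_pos k j'
        omega
    set E : ℕ → ℕ := fun j' => Kone k ^ (j - j') with hEdef
    have hEpos : ∀ j', 0 < E j' := fun j' => pow_pos hK1pos _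
    have hpow : ∀ j', j' ≤ j → Kone k ^ (j+1-j') = Kone k * E j' := by
      intro j' hle
      rw [show j+1-j' = (j-j')+1 by omega, pow_succ, mul_comm]
    set T : ℕ → ℕ → Vertex := fun j' h =>
      if j' = j + 1 then fcorner (sc k (j+1)) (f a)
      else Tc ((h-1) / E j') j' ((h-1) % E j' + 1) with hTdef
    set Q : Finset Vertex := (Finset.range (Kone k)).biUnion Qc with hQdef
    have hTne : ∀ j', j' ≤ j → ¬ (j' = j + 1) := fun j' hle => by omega
    have hdecomp : ∀ j' h, j' ≤ j → 1 ≤ h → h ≤ Kone k ^ (j+1-j') →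
        (h-1)/E j' < Kone k ∧ 1 ≤ (h-1) % E j' + 1 ∧ (h-1) % E j' + 1 ≤ E j' ∧
        h = ((h-1)/E j') * E j' + ((h-1) % E j' + 1) := by
      intro j' h hj'j h1 h2
      rw [hpow j' hj'j] at h2
      have hE := hEpos j'
      have hlt : h - 1 < E j' * Kone k := by
        have hx : h - 1 < Kone k * E j' := by omega
        rwa [mul_comm] at hx
      refine ⟨Nat.div_lt_of_lt_mul hlt, by omega, ?_, ?_⟩
      · have := Nat.mod_lt (h-1) hE; omega
      · have hdm := Nat.div_add_mod (h-1) (E j')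
        rw [Nat.mul_comm (E j') ((h-1)/E j')] at hdm
        omega
    have hcomp : ∀ j', j' ≤ j → ∀ c h₁, c < Kone k → 1 ≤ h₁ → h₁ ≤ E j' →
        ((c * E j' + h₁ - 1) / E j' = c ∧ (c * E j' + h₁ - 1) % E j' + 1 = h₁ ∧
          c * E j' + h₁ ≤ Kone k ^ (j+1-j')) := by
      intro j' hj'j c h₁ hc hh1 hh2
      have hE := hEpos j'
      have he1 : c * E j' + h₁ - 1 = (h₁-1) + c * E j' := by omega
      refine ⟨?_, ?_, ?_⟩
      · rw [he1, Nat.add_mul_div_right _ _ hE, Nat.div_eq_of_lt (by omega)]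
        omega
      · rw [he1, Nat.add_mul_mod_self_right, Nat.mod_eq_of_lt (by omega)]
        omega
      · rw [hpow j' hj'j]
        have hmul : (c+1) * E j' ≤ Kone k * E j' := Nat.mul_le_mul_right _ (by omega)
        have hexp : (c+1) * E j' = c * E j' + E j' := by ring
        omega
    have hQmem' : ∀ x, x ∈ Q ↔ ∃ c, c < Kone k ∧ x ∈ Qc c := by
      intro x
      rw [hQdef, Finset.mem_biUnion]
      constructor
      · rintro ⟨c, hc, hx⟩; exact ⟨c, Finset.mem_range.mp hc, hx⟩
      · rintro ⟨c, hc, hx⟩; exact ⟨c, Finset.mem_range.mpr hc, hx⟩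
    have hQball' : ∀ x ∈ Q, dinf x (f a) ≤ (sc k (j+1) : ℤ) := by
      intro x hx
      obtain ⟨c, hc, hxc⟩ := (hQmem' x).mp hx
      have h1 := hb7 c x hxc
      have h2 := hτball c
      have h3 := dinf_triangle x (f (τ c)) (f a)
      rw [hrr] at h2
      omega
    have hQcard' : Q.card = Kone k ^ j * Ktwo k q := by
      rw [hQdef, Finset.card_biUnion]
      · rw [Finset.sum_congr rfl (fun c _ => hcard c), Finset.sum_const, Finset.card_range,
          smul_eq_mul]
        have hp : Kone k ^ j = Kone k * Kone k ^ (j-1) := by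
          conv_lhs => rw [show j = (j-1)+1 by omega]
          rw [pow_succ]
          ring
        rw [hp]
        ring
      · intro c hc c' hc' hne
        rw [Function.onFun, Finset.disjoint_left]
        intro x hx hx'
        have h1 := hQfar c c' (Finset.mem_range.mp hc) (Finset.mem_range.mp hc') hne x hx x hx'
        have h0 := dinf_self x
        omega
    have hfc := fcorner_le (sc_pos k (j+1)) (f a)
    have hQstar : ∀ x ∈ Q, x ∈ starBox (fcorner (sc k (j+1)) (f a)) (sc k (j+1)) := by
      intro x hx
      exact mem_starBox_of_ball hfc.1 hfc.2.1 hfc.2.2.1 hfc.2.2.2 (hQball' x hx)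
    refine ⟨T, Q, ?_, ?_, ?_, ?_, ?_, ?_, hQball', ?_⟩
    · intro j' h h1 h2 h3 h4
      rcases eq_or_lt_of_le h2 with rfl | hlt
      · refine ⟨((f a).1 / (sc k (j+1) : ℤ), (f a).2 / (sc k (j+1) : ℤ)), ?_⟩
        simp only [hTdef, if_pos rfl]
        rfl
      · have hj'j : j' ≤ j := by omega
        obtain ⟨hc, hh1, hh2, _⟩ := hdecomp j' h hj'j h3 h4
        simp only [hTdef, if_neg (hTne j' hj'j)]
        exact hdy _ j' _ h1 hj'j hh1 hh2
    · intro x hx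
      obtain ⟨c, hc, hxc⟩ := (hQmem' x).mp hx
      obtain ⟨t, ht, rfl⟩ := Finset.mem_image.mp (hsub c hxc)
      rw [Finset.mem_Icc] at ht
      refine Finset.mem_image.mpr ⟨t, Finset.mem_Icc.mpr ⟨?_, ?_⟩, rfl⟩
      · exact le_trans (hτa c) ht.1
      · exact le_trans ht.2 (hβb c)
    · simpa using hQcard'
    · intro x hx y hy hxy
      obtain ⟨c, hc, hxc⟩ := (hQmem' x).mp hx
      obtain ⟨c', hc', hyc⟩ := (hQmem' y).mp hy
      rcases eq_or_ne c c' with rfl | hne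
      · exact hqsep c x hxc y hyc hxy
      · have h1 := hQfar c c' hc hc' hne x hxc y hyc
        have h2 : (2:ℕ)^k ≤ s := by rw [← sc_one]; exact sc_mono hj
        have h3 : (q:ℤ) + 1 ≤ ((2:ℕ)^k : ℤ) := by exact_mod_cast hqk
        have h4 : ((2:ℕ)^k : ℤ) ≤ (s:ℤ) := by exact_mod_cast h2
        omega
    · intro j' h h' h1 h2 h3 h4 h5 h6 hne z hz w hw
      rcases eq_or_lt_of_le h2 with rfl | hlt
      · simp only [Nat.sub_self, pow_zero] at h4 h6
        omega
      · have hj'j : j' ≤ j := by omega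
        obtain ⟨hcH, hh1H, hh2H, heqH⟩ := hdecomp j' h hj'j h3 h4
        obtain ⟨hcH', hh1H', hh2H', heqH'⟩ := hdecomp j' h' hj'j h5 h6
        simp only [hTdef, if_neg (hTne j' hj'j)] at hz hw
        rcases eq_or_ne ((h-1)/E j') ((h'-1)/E j') with hceq | hcne
        · have hmne : (h-1) % E j' + 1 ≠ (h'-1) % E j' + 1 := by
            intro hmeq
            apply hne
            have hdm := Nat.div_add_mod (h-1) (E j')
            have hdm' := Nat.div_add_mod (h'-1) (E j')
            rw [hceq, show (h-1) % E j' = (h'-1) % E j' by omega] at hdm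
            omega
          rw [hceq] at hz
          have := hsep ((h'-1)/E j') j' ((h-1) % E j' + 1) ((h'-1) % E j' + 1)
            h1 hj'j hh1H hh2H hh1H' hh2H' hmne z hz w hw
          exact this
        · exact hcross _ _ hcH hcH' hcne j' _ _ h1 hj'j hh1H hh2H hh1H' hh2H' z hz w hw
    · intro j' h1 h2
      rcases eq_or_lt_of_le h2 with rfl | hlt
      · constructor
        · intro x hx
          refine ⟨1, le_rfl, by simp, ?_⟩
          simp only [hTdef, if_pos rfl]
          exact hQstar x hx
        · intro h hh1 hh2
          simp only [Nat.sub_self, pow_zero] at hh2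
          have hone : h = 1 := by omega
          subst hone
          simp only [hTdef, if_pos rfl]
          have hQsub : Q ∩ starBox (fcorner (sc k (j+1)) (f a)) (sc k (j+1)) = Q :=
            Finset.inter_eq_left.mpr (fun x hx => hQstar x hx)
          rw [hQsub, hQcard', Nat.add_sub_cancel]
      · have hj'j : j' ≤ j := by omega
        constructor
        · intro x hx
          obtain ⟨c, hc, hxc⟩ := (hQmem' x).mp hx
          obtain ⟨h₁, hh₁1, hh₁2, hxs⟩ := (hpart c j' h1 hj'j).1 x hxc
          obtain ⟨hd1, hd2, hd3⟩ := hcomp j' hj'j c h₁ hc hh₁1 hh₁2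
          refine ⟨c * E j' + h₁, by omega, hd3, ?_⟩
          have hTeq : T j' (c * E j' + h₁) = Tc c j' h₁ := by
            simp only [hTdef, if_neg (hTne j' hj'j)]
            rw [hd1, hd2]
          rw [hTeq]
          exact hxs
        · intro h hh1 hh2
          obtain ⟨hcH, hh1H, hh2H, heqH⟩ := hdecomp j' h hj'j hh1 hh2
          have hTeq : T j' h = Tc ((h-1)/E j') j' ((h-1) % E j' + 1) := by
            simp only [hTdef, if_neg (hTne j' hj'j)]
          rw [hTeq]
          have hQint : Q ∩ starBox (Tc ((h-1)/E j') j' ((h-1) % E j' + 1)) (sc k j') =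
              Qc ((h-1)/E j') ∩ starBox (Tc ((h-1)/E j') j' ((h-1) % E j' + 1)) (sc k j') := by
            apply Finset.ext
            intro x
            simp only [Finset.mem_inter]
            constructor
            · rintro ⟨hxQ, hxs⟩
              obtain ⟨c'', hc'', hxc''⟩ := (hQmem' x).mp hxQ
              rcases eq_or_ne c'' ((h-1)/E j') with rfl | hcne
              · exact ⟨hxc'', hxs⟩
              · exfalso
                obtain ⟨h₂, hh₂1, hh₂2, hxs2⟩ := (hpart c'' j' h1 hj'j).1 x hxc''
                have hcr := hcross c'' ((h-1)/E j') hc'' hcH hcne j' h₂ ((h-1) % E j' + 1)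
                  h1 hj'j hh₂1 hh₂2 hh1H hh2H x hxs2 x hxs
                have h0 := dinf_self x
                have hsp : (0:ℤ) < (sc k j' : ℤ) := by exact_mod_cast sc_pos k j'
                omega
            · rintro ⟨hxQ, hxs⟩
              exact ⟨(hQmem' x).mpr ⟨(h-1)/E j', hcH, hxQ⟩, hxs⟩
          rw [hQint]
          exact (hpart ((h-1)/E j') j' h1 hj'j).2 ((h-1) % E j' + 1) hh1H hh2H
    · intro j' h h1 h2 h3 h4 z hz
      rcases eq_or_lt_of_le h2 with rfl | hlt
      · simp only [hTdef, if_pos rfl] at hz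
        have hbt := star_co_bound hz true
        have hbf := star_co_bound hz false
        norm_num [co, fcorner] at hbt hbf
        have hfc1 := hfc.1
        have hfc2 := hfc.2.1
        have hfc3 := hfc.2.2.1
        have hfc4 := hfc.2.2.2
        simp only [fcorner] at hfc1 hfc2 hfc3 hfc4
        refine max_le (abs_le.mpr ⟨?_, ?_⟩) (abs_le.mpr ⟨?_, ?_⟩) <;> omega
      · have hj'j : j' ≤ j := by omega
        obtain ⟨hcH, hh1H, hh2H, _⟩ := hdecomp j' h hj'j h3 h4
        simp only [hTdef, if_neg (hTne j' hj'j)] at hz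
        have hz8 := hb8 _ j' _ h1 hj'j hh1H hh2H z hz
        have ht := hτball ((h-1)/E j')
        rw [hrr] at ht
        have htri := dinf_triangle z (f (τ ((h-1)/E j'))) (f a)
        omega

end S9

/-- **Proposition 2.9 (k-block-nest).** For k ≥ k′(q) and n large, from every path P in V_N of
distance at least N^{1-κ} one can extract an output set Q ⊆ P and families of j-blocks
B_{j,h} ∈ 𝓑𝓓_{jk} (1 ≤ j ≤ j₀, 1 ≤ h ≤ K₁^{j₀-j}) such that:
(a) distinct points of Q have ℓ∞-distance greater than q;
(b) for 1 ≤ j ≤ j₀-1 and h ≠ h′, d(B*_{j,h}, B*_{j,h′}) > 2^{jk};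
(c) |Q| = K₁^{j₀-1} K₂ and for each j, Q = ⋃_h (Q ∩ B*_{j,h}) with |Q ∩ B*_{j,h}| = K₁^{j-1} K₂. -/
theorem statement9 (δ κ : ℝ) (hδ0 : 0 < δ) (hδ1 : δ < 1) (hκ0 : 0 < κ) (hκ : κ < δ ^ 2 / 2)
    (q : ℕ) (hq : 1 ≤ q) :
    ∃ k' : ℕ, ∀ k : ℕ, k' ≤ k → ∀ᶠ n : ℕ in atTop,
      ∀ P : List Vertex, IsPathIn (2 ^ n) P →
        (∃ z w : Vertex, P.head? = some z ∧ P.getLast? = some w ∧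
            ((2 : ℝ) ^ n) ^ ((1 : ℝ) - κ) ≤ (dinf z w : ℝ)) →
        ∃ Q : Finset Vertex, Q ⊆ P.toFinset ∧
        ∃ Bc : ℕ → ℕ → Vertex,
          (∀ j h : ℕ, 1 ≤ j → j ≤ jzero δ n k → 1 ≤ h → h ≤ Kone k ^ (jzero δ n k - j) →
              ∃ c : ℤ × ℤ, Bc j h = (2 ^ (j * k) * c.1, 2 ^ (j * k) * c.2)) ∧
          (∀ z ∈ Q, ∀ w ∈ Q, z ≠ w → (q : ℤ) < dinf z w) ∧
          (∀ j : ℕ, 1 ≤ j → j ≤ jzero δ n k - 1 →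
              ∀ h h' : ℕ, 1 ≤ h → h ≤ Kone k ^ (jzero δ n k - j) →
                1 ≤ h' → h' ≤ Kone k ^ (jzero δ n k - j) → h ≠ h' →
                ∀ z ∈ starBox (Bc j h) (2 ^ (j * k)), ∀ w ∈ starBox (Bc j h') (2 ^ (j * k)),
                  (2 ^ (j * k) : ℤ) < dinf z w) ∧
          Q.card = Kone k ^ (jzero δ n k - 1) * Ktwo k q ∧
          (∀ j : ℕ, 1 ≤ j → j ≤ jzero δ n k →
            (∀ x ∈ Q, ∃ h : ℕ, 1 ≤ h ∧ h ≤ Kone k ^ (jzero δ n k - j) ∧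
                x ∈ starBox (Bc j h) (2 ^ (j * k))) ∧
            (∀ h : ℕ, 1 ≤ h → h ≤ Kone k ^ (jzero δ n k - j) →
                (Q ∩ starBox (Bc j h) (2 ^ (j * k))).card = Kone k ^ (j - 1) * Ktwo k q)) := by
  refine ⟨q + 5, fun k hk => ?_⟩
  have hk5 : 5 ≤ k := by omega
  have hqk : q + 1 ≤ 2^k := by
    have h1 : q + 1 < 2^(q+1) := Nat.lt_two_pow_self
    have h2 : (2:ℕ)^(q+1) ≤ 2^k := Nat.pow_le_pow_right (by norm_num) (by omega)
    omega
  have hkpos : 0 < k := by omega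
  have hδ2 : δ^2 < 1 := by nlinarith
  filter_upwards [Filter.eventually_ge_atTop (2*k), Filter.eventually_ge_atTop 1] with n hn hn1
  intro P hP hzw
  obtain ⟨z, w, hz, hw, hd⟩ := hzw
  have hm2 : 2 ≤ n / k := (Nat.le_div_iff_mul_le hkpos).mpr (by omega)
  have hm2' : (2:ℝ) ≤ ((n/k : ℕ) : ℝ) := by exact_mod_cast hm2
  have hfac : (0:ℝ) < 1 - δ^2/2 := by nlinarith
  have hj₀1 : 1 ≤ jzero δ n k := by
    unfold jzero
    apply Nat.le_floor
    have hx := mul_le_mul_of_nonneg_left hm2' hfac.le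
    push_cast
    nlinarith
  set j₀ := jzero δ n k with hj₀def
  have hj₀k : ((j₀ * k : ℕ) : ℝ) ≤ (n:ℝ) * (1 - κ) := by
    have h1 : (j₀ : ℝ) ≤ (1 - δ^2/2) * ((n/k : ℕ) : ℝ) := by
      rw [hj₀def]
      unfold jzero
      exact Nat.floor_le (by positivity)
    have h2 : ((n/k : ℕ) : ℝ) * k ≤ (n:ℝ) := by exact_mod_cast Nat.div_mul_le_self n k
    have hkr : (0:ℝ) ≤ (k:ℝ) := by positivity
    have h3 : (j₀:ℝ) * k ≤ (1 - δ^2/2) * (((n/k : ℕ) : ℝ) * k) := by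
      have := mul_le_mul_of_nonneg_right h1 hkr
      linarith [this]
    have h4 : (1 - δ^2/2) * (((n/k : ℕ) : ℝ) * k) ≤ (1 - δ^2/2) * n :=
      mul_le_mul_of_nonneg_left h2 hfac.le
    have h5 : (1 - δ^2/2) * (n:ℝ) ≤ (1 - κ) * n := by
      have hn0 : (0:ℝ) ≤ n := by positivity
      nlinarith
    push_cast
    nlinarith
  have hsld : ((S9.sc k j₀ : ℕ) : ℝ) ≤ ((2:ℝ)^n) ^ ((1:ℝ) - κ) := by
    have hbase : ((2:ℝ)^n) ^ ((1:ℝ) - κ) = (2:ℝ) ^ ((n:ℝ) * ((1:ℝ)-κ)) := by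
      rw [← Real.rpow_natCast 2 n, ← Real.rpow_mul (by norm_num : (0:ℝ) ≤ 2)]
    have h1 : ((S9.sc k j₀ : ℕ) : ℝ) = (2:ℝ) ^ (((j₀ * k : ℕ) : ℕ) : ℝ) := by
      rw [Real.rpow_natCast]
      unfold S9.sc
      push_cast
      ring
    rw [h1, hbase]
    apply Real.rpow_le_rpow_of_exponent_le one_le_two
    calc ((j₀ * k : ℕ) : ℝ) ≤ (n:ℝ) * (1 - κ) := hj₀k
    _ = (n:ℝ) * ((1:ℝ) - κ) := by ring
  have hsd : ((S9.sc k j₀ : ℕ) : ℤ) ≤ dinf z w := by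
    have h1 : ((S9.sc k j₀ : ℕ) : ℝ) ≤ ((dinf z w : ℤ) : ℝ) := le_trans hsld hd
    exact_mod_cast h1
  obtain ⟨hPne, hPin, hPchain⟩ := hP
  have hL1 : 1 ≤ P.length := List.length_pos_iff.mpr hPne
  set L := P.length with hLdef
  set f : ℕ → Vertex := fun t => P.getD t ((0:ℤ),(0:ℤ)) with hfdef
  have hadjf : ∀ t, t < L - 1 → adj (f t) (f (t+1)) := by
    intro t ht
    show adj (P.getD t _) (P.getD (t+1) _)
    rw [List.getD_eq_getElem P _ (by omega), List.getD_eq_getElem P _ (by omega)]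
    exact List.isChain_iff_getElem.mp hPchain t (by omega)
  have hf0 : f 0 = z := by
    show P.getD 0 _ = z
    rw [List.head?_eq_getElem?] at hz
    rw [List.getD_eq_getElem?_getD, hz]
    rfl
  have hfl : f (L-1) = w := by
    show P.getD (L-1) _ = w
    rw [List.getLast?_eq_getElem?] at hw
    rw [List.getD_eq_getElem?_getD, hw]
    rfl
  have hrr0 : 0 ≤ S9.rr k j₀ := S9.rr_nonneg k j₀
  have hrrsc : S9.rr k j₀ ≤ ((S9.sc k j₀ : ℕ) : ℤ) := S9.rr_le_sc k j₀
  set d : ℕ → ℤ := fun t => dinf (f t) (f 0) with hddef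
  have hdstep : ∀ t, 0 ≤ t → t < L - 1 → |d (t+1) - d t| ≤ 1 := by
    intro t _ h2
    have hadj' : adj (f t) (f (t+1)) := hadjf t h2
    calc |d (t+1) - d t| ≤ dinf (f (t+1)) (f t) := S9.dinf_step _ _ _
      _ ≤ 1 := by rw [S9.dinf_comm]; exact S9.adj_dinf_le hadj'
  have hdL : S9.rr k j₀ ≤ d (L-1) := by
    have h1 : d (L-1) = dinf z w := by
      show dinf (f (L-1)) (f 0) = _
      rw [hf0, hfl, S9.dinf_comm]
    rw [h1]
    omega
  obtain ⟨b₀, h0b, hbL, hdb, hdmin⟩ := S9.first_ge d 0 (L-1) (by omega) hdstep (S9.rr k j₀)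
    (by show dinf (f 0) (f 0) ≤ _; rw [S9.dinf_self]; exact hrr0) hdL
  have hballr : ∀ t, 0 ≤ t → t ≤ b₀ → dinf (f t) (f 0) ≤ S9.rr k j₀ := by
    intro t h1 h2
    rcases eq_or_lt_of_le h2 with rfl | hlt
    · exact le_of_eq hdb
    · exact le_of_lt (hdmin t h1 hlt)
  have hcoordr : ∃ e : Bool, |S9.co e (f b₀) - S9.co e (f 0)| = S9.rr k j₀ :=
    S9.dinf_cases hdb
  obtain ⟨T, Q, c1, c2, c3, c4, c5, c6, c7, c8⟩ := S9.build k q hq hk5 hqk f j₀ hj₀1 0 b₀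
    (by omega) (fun t h1 h2 => hadjf t (by omega)) hballr hcoordr
  have hscast : ∀ jj : ℕ, ((S9.sc k jj : ℕ) : ℤ) = (2:ℤ)^(jj*k) := by
    intro jj
    unfold S9.sc
    push_cast
    ring
  refine ⟨Q, ?_, T, ?_, c4, ?_, ?_, ?_⟩
  · intro x hx
    have hx' := c2 hx
    obtain ⟨t, ht, rfl⟩ := Finset.mem_image.mp hx'
    rw [Finset.mem_Icc] at ht
    rw [List.mem_toFinset]
    show P.getD t _ ∈ P
    rw [List.getD_eq_getElem P _ (by omega)]
    exact List.getElem_mem _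
  · intro j h h1 h2 h3 h4
    obtain ⟨cc, hcc⟩ := c1 j h h1 h2 h3 h4
    exact ⟨cc, by rw [hcc, hscast j]⟩
  · intro j h1 h2 h h' hh1 hh2 hh3 hh4 hne z' hz' w' hw'
    have h2' : j ≤ j₀ := by omega
    have := c5 j h h' h1 h2' hh1 hh2 hh3 hh4 hne z' hz' w' hw'
    rw [hscast j] at this
    exact this
  · rw [c3]
  · intro j h1 h2
    obtain ⟨pa, pb⟩ := c6 j h1 h2
    exact ⟨pa, pb⟩


end
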